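/- Let t > 3 be a prime, ζ a primitive t-th root of unity, and λ = (1-ζ)(1-ζ̄). Suppose X, Y, Z are pairwise relatively prime nonzero rational integers, B is a nonzero integer coprime to t, and X^t + Y^t = B·Z^t with t dividing Z. Write Z = t^v·Z₁ with v ≥ 1 and t not dividing Z₁. Then there exist a unit η of ℤ[ζ+ζ̄] and an integer m ≥ t (namely m = tv(t-1)/2) such that X^t + Y^t = η·B·λ^m·Z₁^t, and X, Y, Z₁, λ are pairwise coprime in ℤ[ζ+ζ̄]. -/

import Mathlib

open NumberField

lemma aux_conj (t : ℕ+) (ht : (t : ℕ).Prime) (ζ : 𝓞 (CyclotomicField t ℚ))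
    (hζ : IsPrimitiveRoot ζ (t : ℕ)) :
    ∃ conj : 𝓞 (CyclotomicField t ℚ) ≃ₐ[ℤ] 𝓞 (CyclotomicField t ℚ),
      conj ζ = ζ ^ ((t : ℕ) - 1) := by
  haveI : Fact (Nat.Prime (t : ℕ)) := ⟨ht⟩
  haveI : IsCyclotomicExtension {(t : ℕ)} ℚ (CyclotomicField t ℚ) := CyclotomicField.isCyclotomicExtension _ _
  haveI : FiniteDimensional ℚ (CyclotomicField t ℚ) :=
    IsCyclotomicExtension.finiteDimensional {(t : ℕ)} ℚ _
  haveI : NumberField (CyclotomicField t ℚ) := IsCyclotomicExtension.numberField {(t : ℕ)} ℚ _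
  have hinj : Function.Injective (algebraMap (𝓞 (CyclotomicField t ℚ)) (CyclotomicField t ℚ)) := RingOfIntegers.coe_injective
  have hζK : IsPrimitiveRoot (algebraMap (𝓞 (CyclotomicField t ℚ)) (CyclotomicField t ℚ) ζ) (t : ℕ) :=
    hζ.map_of_injective hinj
  have hcop : Nat.Coprime ((t : ℕ) - 1) (t : ℕ) := by
    have h2 := ht.two_le
    exact ((Nat.Prime.coprime_iff_not_dvd ht).mpr
      (fun h => by have := Nat.le_of_dvd (by omega) h; omega)).symm
  have hirr : Irreducible (Polynomial.cyclotomic (t : ℕ) ℚ) :=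
    Polynomial.cyclotomic.irreducible_rat t.pos
  have hζK' : IsPrimitiveRoot ((algebraMap (𝓞 (CyclotomicField t ℚ)) (CyclotomicField t ℚ) ζ) ^ ((t : ℕ) - 1)) (t : ℕ) :=
    hζK.pow_of_coprime _ hcop
  have hmin : minpoly ℚ (hζK.powerBasis ℚ).gen = minpoly ℚ (hζK'.powerBasis ℚ).gen := by
    rw [IsPrimitiveRoot.powerBasis_gen (K := ℚ) (hζ := hζK), IsPrimitiveRoot.powerBasis_gen (K := ℚ) (hζ := hζK'),
      ← hζK.minpoly_eq_cyclotomic_of_irreducible hirr,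
      ← hζK'.minpoly_eq_cyclotomic_of_irreducible hirr]
  let σK : CyclotomicField t ℚ ≃ₐ[ℚ] CyclotomicField t ℚ := (hζK.powerBasis ℚ).equivOfMinpoly (hζK'.powerBasis ℚ) hmin
  have hσK : σK (algebraMap (𝓞 (CyclotomicField t ℚ)) (CyclotomicField t ℚ) ζ)
      = (algebraMap (𝓞 (CyclotomicField t ℚ)) (CyclotomicField t ℚ) ζ) ^ ((t : ℕ) - 1) := by
    simpa using (hζK.powerBasis ℚ).equivOfMinpoly_gen (hζK'.powerBasis ℚ) hmin
  refine ⟨galRestrict ℤ ℚ (CyclotomicField t ℚ) (𝓞 (CyclotomicField t ℚ)) σK, hinj ?_⟩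
  rw [algebraMap_galRestrict_apply, hσK, map_pow]


lemma aux_adjoin_top (t : ℕ+) (ht : (t : ℕ).Prime) (ζ : 𝓞 (CyclotomicField t ℚ))
    (hζ : IsPrimitiveRoot ζ (t : ℕ)) :
    Algebra.adjoin ℤ ({ζ} : Set (𝓞 (CyclotomicField t ℚ))) = ⊤ := by
  haveI : Fact (Nat.Prime (t : ℕ)) := ⟨ht⟩
  haveI : IsCyclotomicExtension {(t : ℕ)} ℚ (CyclotomicField t ℚ) := CyclotomicField.isCyclotomicExtension _ _
  have hinj : Function.Injective (algebraMap (𝓞 (CyclotomicField t ℚ)) (CyclotomicField t ℚ)) :=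
    RingOfIntegers.coe_injective
  have hζK : IsPrimitiveRoot (algebraMap (𝓞 (CyclotomicField t ℚ)) (CyclotomicField t ℚ) ζ) ((t : ℕ+) : ℕ) :=
    hζ.map_of_injective hinj
  have h1 : hζK.toInteger = ζ := rfl
  have h2 := hζK.integralPowerBasis.adjoin_gen_eq_top
  rwa [hζK.integralPowerBasis_gen, h1] at h2

set_option maxHeartbeats 1000000 in
/-- Let `t > 3` be a prime, `ζ ∈ ℤ[ζ]` (the ring of integers of
`ℚ(ζ_t)`) a primitive `t`-th root of unity, `ζbar = ζ⁻¹`, `λ = (1-ζ)(1-ζbar)`.  Suppose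
`X, Y, Z` are pairwise coprime nonzero integers, `B` a nonzero integer coprime to `t`,
`X^t + Y^t = B·Z^t` with `t ∣ Z`, and write `Z = t^v·Z₁` with `v ≥ 1` and `t ∤ Z₁`.
Then there are a unit `η` of `ℤ[ζ+ζbar]` and an integer `m ≥ t`
(namely `m = tv(t-1)/2`) such that `X^t + Y^t = η·B·λ^m·Z₁^t` and `X, Y, Z₁, λ` are
pairwise coprime in `ℤ[ζ+ζbar]`. -/
theorem stmt_15 (t : ℕ+) (ht : (t : ℕ).Prime) (ht3 : 3 < (t : ℕ))
    (ζ ζbar : 𝓞 (CyclotomicField t ℚ)) (hζ : IsPrimitiveRoot ζ (t : ℕ))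
    (hζbar : ζ * ζbar = 1)
    (lam : Algebra.adjoin ℤ ({ζ + ζbar} : Set (𝓞 (CyclotomicField t ℚ))))
    (hlam : (lam : 𝓞 (CyclotomicField t ℚ)) = (1 - ζ) * (1 - ζbar))
    (X Y Z : ℤ) (hX : X ≠ 0) (hY : Y ≠ 0) (hZ : Z ≠ 0)
    (hXY : IsCoprime X Y) (hYZ : IsCoprime Y Z) (hXZ : IsCoprime X Z)
    (B : ℤ) (hB : B ≠ 0) (hBt : IsCoprime B ((t : ℕ) : ℤ))
    (heq : X ^ (t : ℕ) + Y ^ (t : ℕ) = B * Z ^ (t : ℕ))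
    (htZ : ((t : ℕ) : ℤ) ∣ Z)
    (v : ℕ) (hv : 1 ≤ v) (Z₁ : ℤ) (hZfact : Z = ((t : ℕ) : ℤ) ^ v * Z₁)
    (hZ₁ : ¬ ((t : ℕ) : ℤ) ∣ Z₁) :
    ∃ (η : (Algebra.adjoin ℤ ({ζ + ζbar} : Set (𝓞 (CyclotomicField t ℚ))))ˣ)
      (m : ℕ), (t : ℕ) ≤ m ∧ m = (t : ℕ) * v * (((t : ℕ) - 1) / 2) ∧
      (X : Algebra.adjoin ℤ ({ζ + ζbar} : Set (𝓞 (CyclotomicField t ℚ)))) ^ (t : ℕ) +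
          (Y : Algebra.adjoin ℤ ({ζ + ζbar} : Set (𝓞 (CyclotomicField t ℚ)))) ^ (t : ℕ) =
        η * (B : Algebra.adjoin ℤ ({ζ + ζbar} : Set (𝓞 (CyclotomicField t ℚ)))) *
          lam ^ m *
          (Z₁ : Algebra.adjoin ℤ ({ζ + ζbar} : Set (𝓞 (CyclotomicField t ℚ)))) ^ (t : ℕ) ∧
      IsCoprime (X : Algebra.adjoin ℤ ({ζ + ζbar} : Set (𝓞 (CyclotomicField t ℚ))))
        (Y : Algebra.adjoin ℤ ({ζ + ζbar} : Set (𝓞 (CyclotomicField t ℚ)))) ∧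
      IsCoprime (X : Algebra.adjoin ℤ ({ζ + ζbar} : Set (𝓞 (CyclotomicField t ℚ))))
        (Z₁ : Algebra.adjoin ℤ ({ζ + ζbar} : Set (𝓞 (CyclotomicField t ℚ)))) ∧
      IsCoprime (X : Algebra.adjoin ℤ ({ζ + ζbar} : Set (𝓞 (CyclotomicField t ℚ)))) lam ∧
      IsCoprime (Y : Algebra.adjoin ℤ ({ζ + ζbar} : Set (𝓞 (CyclotomicField t ℚ))))
        (Z₁ : Algebra.adjoin ℤ ({ζ + ζbar} : Set (𝓞 (CyclotomicField t ℚ)))) ∧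
      IsCoprime (Y : Algebra.adjoin ℤ ({ζ + ζbar} : Set (𝓞 (CyclotomicField t ℚ)))) lam ∧
      IsCoprime (Z₁ : Algebra.adjoin ℤ ({ζ + ζbar} : Set (𝓞 (CyclotomicField t ℚ)))) lam := by
  classical
  haveI hFact : Fact (Nat.Prime (t : ℕ)) := ⟨ht⟩
  haveI : IsCyclotomicExtension {(t : ℕ)} ℚ (CyclotomicField t ℚ) := CyclotomicField.isCyclotomicExtension _ _
  haveI : NumberField (CyclotomicField t ℚ) := IsCyclotomicExtension.numberField {(t : ℕ)} ℚ _
  have htpos : 0 < (t : ℕ) := t.pos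
  have ht2 : 2 ≤ (t : ℕ) := ht.two_le
  have hodd : (t : ℕ) % 2 = 1 := Nat.odd_iff.mp (ht.odd_of_ne_two (by omega))
  set k := ((t : ℕ) - 1) / 2 with hkdef
  have h2k : 2 * k = (t : ℕ) - 1 := by omega
  have hk2 : 2 ≤ k := by omega
  have hζt : ζ ^ (t : ℕ) = 1 := hζ.pow_eq_one
  have hζunit : IsUnit ζ := IsUnit.of_mul_eq_one ζbar hζbar
  have hζne : ζ ≠ 0 := hζunit.ne_zero
  have hmulzb : ζ * ζ ^ ((t : ℕ) - 1) = 1 := by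
    rw [← pow_succ' ζ ((t : ℕ) - 1), Nat.sub_add_cancel (by omega)]
    exact hζt
  have hzb : ζbar = ζ ^ ((t : ℕ) - 1) := mul_left_cancel₀ hζne (hζbar.trans hmulzb.symm)
  obtain ⟨conj, hconjζ⟩ := aux_conj t ht ζ hζ
  have hconjz : conj ζ = ζbar := by rw [hconjζ, hzb]
  have hconjzbar : conj ζbar = ζ := by
    obtain ⟨a, ha⟩ : ∃ a, (t : ℕ) = a + 2 := ⟨(t : ℕ) - 2, by omega⟩
    rw [hzb, map_pow, hconjζ, ← pow_mul,
      show ((t : ℕ) - 1) * ((t : ℕ) - 1) = (t : ℕ) * ((t : ℕ) - 2) + 1 from by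
        rw [ha]; simp; ring,
      pow_add, pow_mul, hζt, one_pow, pow_one, one_mul]
  have hconjθ : conj (ζ + ζbar) = ζ + ζbar := by rw [map_add, hconjz, hconjzbar, add_comm]
  have hfix : ∀ a : (𝓞 (CyclotomicField t ℚ)), a ∈ (Algebra.adjoin ℤ ({ζ + ζbar} : Set (𝓞 (CyclotomicField t ℚ)))) → conj a = a := by
    intro a ha
    induction ha using Algebra.adjoin_induction with
    | mem x hx => obtain rfl := Set.mem_singleton_iff.mp hx; exact hconjθ
    | algebraMap r => exact conj.commutes r
    | add x y hx hy ihx ihy => rw [map_add, ihx, ihy]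
    | mul x y hx hy ihx ihy => rw [map_mul, ihx, ihy]
  have hζsq : ζ * ζ = (ζ + ζbar) * ζ - 1 := by linear_combination -hζbar
  have hsplit : ∀ x : (𝓞 (CyclotomicField t ℚ)), ∃ a b : (𝓞 (CyclotomicField t ℚ)), a ∈ (Algebra.adjoin ℤ ({ζ + ζbar} : Set (𝓞 (CyclotomicField t ℚ)))) ∧ b ∈ (Algebra.adjoin ℤ ({ζ + ζbar} : Set (𝓞 (CyclotomicField t ℚ)))) ∧ x = a + b * ζ := by
    intro x
    have hx : x ∈ Algebra.adjoin ℤ ({ζ} : Set (𝓞 (CyclotomicField t ℚ))) := by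
      rw [aux_adjoin_top t ht ζ hζ]; exact Algebra.mem_top
    induction hx using Algebra.adjoin_induction with
    | mem y hy =>
        obtain rfl := Set.mem_singleton_iff.mp hy
        exact ⟨0, 1, zero_mem _, one_mem _, by ring⟩
    | algebraMap r =>
        exact ⟨algebraMap ℤ (𝓞 (CyclotomicField t ℚ)) r, 0, Subalgebra.algebraMap_mem _ r, zero_mem _, by ring⟩
    | add x y hx hy ihx ihy =>
        obtain ⟨a, b, ha, hb, hab⟩ := ihx
        obtain ⟨c, d, hc, hd, hcd⟩ := ihy
        exact ⟨a + c, b + d, add_mem ha hc, add_mem hb hd, by rw [hab, hcd]; ring⟩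
    | mul x y hx hy ihx ihy =>
        obtain ⟨a, b, ha, hb, hab⟩ := ihx
        obtain ⟨c, d, hc, hd, hcd⟩ := ihy
        refine ⟨a * c - b * d, a * d + b * c + b * d * (ζ + ζbar), ?_, ?_, ?_⟩
        · exact sub_mem (mul_mem ha hc) (mul_mem hb hd)
        · exact add_mem (add_mem (mul_mem ha hd) (mul_mem hb hc))
            (mul_mem (mul_mem hb hd) (Algebra.self_mem_adjoin_singleton ℤ _))
        · rw [hab, hcd]; linear_combination (b * d) * hζsq
  have hzne : ζ - ζbar ≠ 0 := by
    intro h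
    have h' : ζ = ζbar := sub_eq_zero.mp h
    have h2 : ζ ^ 2 = 1 := by rw [pow_two]; nth_rewrite 2 [h']; exact hζbar
    have h3 := Nat.le_of_dvd (by norm_num) (hζ.dvd_of_pow_eq_one 2 h2)
    omega
  have hreal : ∀ x : (𝓞 (CyclotomicField t ℚ)), conj x = x → x ∈ (Algebra.adjoin ℤ ({ζ + ζbar} : Set (𝓞 (CyclotomicField t ℚ)))) := by
    intro x hcx
    obtain ⟨a, b, ha, hb, rfl⟩ := hsplit x
    rw [map_add, map_mul, hfix a ha, hfix b hb, hconjz] at hcx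
    have hb0 : b = 0 := by
      have h3 : b * (ζ - ζbar) = 0 := by linear_combination -hcx
      rcases mul_eq_zero.mp h3 with h | h
      · exact h
      · exact absurd h hzne
    rw [hb0, zero_mul, add_zero]
    exact ha
  haveI : NeZero (t : ℕ) := ⟨by omega⟩
  have hassoc1 : ∀ μ : (𝓞 (CyclotomicField t ℚ)), IsPrimitiveRoot μ (t : ℕ) → Associated (1 - ζ) (1 - μ) := by
    intro μ hμ
    have hd1 : (1 - ζ) ∣ (1 - μ) := by
      obtain ⟨i, _, rfl⟩ := hζ.eq_pow_of_pow_eq_one hμ.pow_eq_one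
      rw [show (1 : (𝓞 (CyclotomicField t ℚ))) - ζ = -(ζ - 1) from by ring,
        show (1 : (𝓞 (CyclotomicField t ℚ))) - ζ ^ i = -(ζ ^ i - 1) from by ring, neg_dvd, dvd_neg]
      exact sub_one_dvd_pow_sub_one ζ i
    have hd2 : (1 - μ) ∣ (1 - ζ) := by
      obtain ⟨i, _, hi⟩ := hμ.eq_pow_of_pow_eq_one hζt
      rw [← hi, show (1 : (𝓞 (CyclotomicField t ℚ))) - μ = -(μ - 1) from by ring,
        show (1 : (𝓞 (CyclotomicField t ℚ))) - μ ^ i = -(μ ^ i - 1) from by ring, neg_dvd, dvd_neg]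
      exact sub_one_dvd_pow_sub_one μ i
    exact associated_of_dvd_dvd hd1 hd2
  have hteval : ((t : ℕ) : (𝓞 (CyclotomicField t ℚ))) = ∏ μ ∈ primitiveRoots (t : ℕ) (𝓞 (CyclotomicField t ℚ)), (1 - μ) := by
    have h1 := Polynomial.eval_one_cyclotomic_prime (R := (𝓞 (CyclotomicField t ℚ))) (p := (t : ℕ))
    rw [Polynomial.cyclotomic_eq_prod_X_sub_primitiveRoots hζ] at h1
    rw [← h1, Polynomial.eval_prod]
    simp
  have hcard : (primitiveRoots (t : ℕ) (𝓞 (CyclotomicField t ℚ))).card = (t : ℕ) - 1 := by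
    rw [hζ.card_primitiveRoots, Nat.totient_prime ht]
  have hassoc2 : Associated ((t : ℕ) : (𝓞 (CyclotomicField t ℚ))) ((1 - ζ) ^ ((t : ℕ) - 1)) := by
    rw [hteval, ← hcard, ← Finset.prod_const]
    exact Associated.prod _ _ _ fun μ hμ =>
      (hassoc1 μ (isPrimitiveRoot_of_mem_primitiveRoots hμ)).symm
  have hζbarunit : IsUnit ζbar := IsUnit.of_mul_eq_one ζ (by rw [mul_comm]; exact hζbar)
  have hassoc3 : Associated ((1 - ζ) ^ 2) ((1 - ζ) * (1 - ζbar)) := by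
    refine ⟨(hζbarunit.neg).unit, ?_⟩
    rw [IsUnit.unit_spec]
    linear_combination (1 - ζ) * hζbar
  have hassoc4 : Associated ((t : ℕ) : (𝓞 (CyclotomicField t ℚ))) (((1 - ζ) * (1 - ζbar)) ^ k) := by
    refine hassoc2.trans ?_
    have h1 : (1 - ζ) ^ ((t : ℕ) - 1) = ((1 - ζ) ^ 2) ^ k := by
      rw [← pow_mul, h2k]
    rw [h1]
    exact hassoc3.pow_pow
  obtain ⟨u, hu⟩ := hassoc4
  have ht0 : ((t : ℕ) : (𝓞 (CyclotomicField t ℚ))) ≠ 0 := Nat.cast_ne_zero.mpr (by omega)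
  have hconjlam : conj ((1 - ζ) * (1 - ζbar)) = (1 - ζ) * (1 - ζbar) := by
    rw [map_mul, map_sub, map_sub, map_one, hconjz, hconjzbar]; ring
  have hconju : conj (↑u : (𝓞 (CyclotomicField t ℚ))) = ↑u := by
    have h1 : ((t : ℕ) : (𝓞 (CyclotomicField t ℚ))) * conj ↑u = ((1 - ζ) * (1 - ζbar)) ^ k := by
      have h2 := congrArg conj hu
      rwa [map_mul, map_pow, map_natCast, hconjlam] at h2
    exact mul_left_cancel₀ ht0 (h1.trans hu.symm)
  have hune : (↑u : (𝓞 (CyclotomicField t ℚ))) ≠ 0 := u.ne_zero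
  have hconjuinv : conj (↑u⁻¹ : (𝓞 (CyclotomicField t ℚ))) = ↑u⁻¹ := by
    have h1 : (↑u : (𝓞 (CyclotomicField t ℚ))) * conj ↑u⁻¹ = ↑u * ↑u⁻¹ := by
      have h2 := congrArg conj u.mul_inv
      rw [map_mul, map_one, hconju] at h2
      rw [h2, u.mul_inv]
    exact mul_left_cancel₀ hune h1
  have humem : (↑u : (𝓞 (CyclotomicField t ℚ))) ∈ (Algebra.adjoin ℤ ({ζ + ζbar} : Set (𝓞 (CyclotomicField t ℚ)))) := hreal _ hconju
  have huinvmem : (↑u⁻¹ : (𝓞 (CyclotomicField t ℚ))) ∈ (Algebra.adjoin ℤ ({ζ + ζbar} : Set (𝓞 (CyclotomicField t ℚ)))) := hreal _ hconjuinv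
  let η₀ : ((Algebra.adjoin ℤ ({ζ + ζbar} : Set (𝓞 (CyclotomicField t ℚ)))))ˣ :=
    { val := ⟨↑u, humem⟩, inv := ⟨↑u⁻¹, huinvmem⟩,
      val_inv := Subtype.ext u.mul_inv, inv_val := Subtype.ext u.inv_mul }
  have hη₀ : ((t : ℕ) : (Algebra.adjoin ℤ ({ζ + ζbar} : Set (𝓞 (CyclotomicField t ℚ))))) * ↑η₀ = lam ^ k := by
    apply Subtype.ext
    push_cast
    rw [hlam]
    exact hu
  have htR : ((t : ℕ) : (Algebra.adjoin ℤ ({ζ + ζbar} : Set (𝓞 (CyclotomicField t ℚ))))) = lam ^ k * ↑η₀⁻¹ := by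
    calc ((t : ℕ) : (Algebra.adjoin ℤ ({ζ + ζbar} : Set (𝓞 (CyclotomicField t ℚ))))) = ((t : ℕ) : (Algebra.adjoin ℤ ({ζ + ζbar} : Set (𝓞 (CyclotomicField t ℚ))))) * ↑η₀ * ↑η₀⁻¹ := by
          rw [mul_assoc, Units.mul_inv, mul_one]
      _ = lam ^ k * ↑η₀⁻¹ := by rw [hη₀]
  set m := (t : ℕ) * v * k with hmdef
  have htm : (t : ℕ) ≤ m := by
    calc (t : ℕ) = (t : ℕ) * 1 * 1 := by ring
      _ ≤ (t : ℕ) * v * k := Nat.mul_le_mul (Nat.mul_le_mul le_rfl hv) (by omega)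
  have heqR : (X : (Algebra.adjoin ℤ ({ζ + ζbar} : Set (𝓞 (CyclotomicField t ℚ))))) ^ (t : ℕ) + (Y : (Algebra.adjoin ℤ ({ζ + ζbar} : Set (𝓞 (CyclotomicField t ℚ))))) ^ (t : ℕ)
      = (B : (Algebra.adjoin ℤ ({ζ + ζbar} : Set (𝓞 (CyclotomicField t ℚ))))) * (((t : ℕ) : (Algebra.adjoin ℤ ({ζ + ζbar} : Set (𝓞 (CyclotomicField t ℚ))))) ^ v * (Z₁ : (Algebra.adjoin ℤ ({ζ + ζbar} : Set (𝓞 (CyclotomicField t ℚ)))))) ^ (t : ℕ) := by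
    have heq2 : X ^ (t : ℕ) + Y ^ (t : ℕ) = B * (((t : ℕ) : ℤ) ^ v * Z₁) ^ (t : ℕ) := by
      rw [heq, hZfact]
    have h3 := congrArg (fun n : ℤ => (n : (Algebra.adjoin ℤ ({ζ + ζbar} : Set (𝓞 (CyclotomicField t ℚ)))))) heq2
    push_cast at h3
    exact h3
  have hlamdvdt : lam ∣ ((t : ℕ) : (Algebra.adjoin ℤ ({ζ + ζbar} : Set (𝓞 (CyclotomicField t ℚ))))) := by
    rw [htR]
    exact dvd_mul_of_dvd_left (dvd_pow_self lam (by omega)) _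
  have hcast : ∀ W : ℤ, ((((t : ℕ) : ℤ)) : (Algebra.adjoin ℤ ({ζ + ζbar} : Set (𝓞 (CyclotomicField t ℚ))))) = ((t : ℕ) : (Algebra.adjoin ℤ ({ζ + ζbar} : Set (𝓞 (CyclotomicField t ℚ))))) := fun _ => by push_cast; ring
  refine ⟨η₀⁻¹ ^ (v * (t : ℕ)), m, htm, rfl, ?_, ?_, ?_, ?_, ?_, ?_, ?_⟩
  · rw [heqR, mul_pow, ← pow_mul, htR, mul_pow, ← pow_mul, ← Units.val_pow_eq_pow_val,
      show k * (v * (t : ℕ)) = m from by rw [hmdef]; ring]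
    ring
  · simpa using hXY.map (Int.castRingHom (Algebra.adjoin ℤ ({ζ + ζbar} : Set (𝓞 (CyclotomicField t ℚ)))))
  · have h1 : Z₁ ∣ Z := Dvd.intro_left _ hZfact.symm
    simpa using (hXZ.of_isCoprime_of_dvd_right h1).map (Int.castRingHom (Algebra.adjoin ℤ ({ζ + ζbar} : Set (𝓞 (CyclotomicField t ℚ)))))
  · have h1 : IsCoprime X ((t : ℕ) : ℤ) := hXZ.of_isCoprime_of_dvd_right htZ
    have h2 : IsCoprime (X : (Algebra.adjoin ℤ ({ζ + ζbar} : Set (𝓞 (CyclotomicField t ℚ))))) ((t : ℕ) : (Algebra.adjoin ℤ ({ζ + ζbar} : Set (𝓞 (CyclotomicField t ℚ))))) := by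
      have := h1.map (Int.castRingHom (Algebra.adjoin ℤ ({ζ + ζbar} : Set (𝓞 (CyclotomicField t ℚ)))))
      simpa using this
    exact h2.of_isCoprime_of_dvd_right hlamdvdt
  · have h1 : Z₁ ∣ Z := Dvd.intro_left _ hZfact.symm
    simpa using (hYZ.of_isCoprime_of_dvd_right h1).map (Int.castRingHom (Algebra.adjoin ℤ ({ζ + ζbar} : Set (𝓞 (CyclotomicField t ℚ)))))
  · have h1 : IsCoprime Y ((t : ℕ) : ℤ) := hYZ.of_isCoprime_of_dvd_right htZ
    have h2 : IsCoprime (Y : (Algebra.adjoin ℤ ({ζ + ζbar} : Set (𝓞 (CyclotomicField t ℚ))))) ((t : ℕ) : (Algebra.adjoin ℤ ({ζ + ζbar} : Set (𝓞 (CyclotomicField t ℚ))))) := by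
      have := h1.map (Int.castRingHom (Algebra.adjoin ℤ ({ζ + ζbar} : Set (𝓞 (CyclotomicField t ℚ)))))
      simpa using this
    exact h2.of_isCoprime_of_dvd_right hlamdvdt
  · have h1 : IsCoprime Z₁ ((t : ℕ) : ℤ) :=
      (((Nat.prime_iff_prime_int.mp ht).coprime_iff_not_dvd).mpr hZ₁).symm
    have h2 : IsCoprime (Z₁ : (Algebra.adjoin ℤ ({ζ + ζbar} : Set (𝓞 (CyclotomicField t ℚ))))) ((t : ℕ) : (Algebra.adjoin ℤ ({ζ + ζbar} : Set (𝓞 (CyclotomicField t ℚ))))) := by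
      have := h1.map (Int.castRingHom (Algebra.adjoin ℤ ({ζ + ζbar} : Set (𝓞 (CyclotomicField t ℚ)))))
      simpa using this
    exact h2.of_isCoprime_of_dvd_right hlamdvdt
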